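/- For a > 0, the function φ_a(a,τ) := ∫_1^{τ/a} (a²v²+2)/√((a²v²+4)(v²−1)) dv − (τ/2)·√((τ²+4)/(τ²−a²)) is positive for all sufficiently large τ. -/

import Mathlib

open Real Filter intervalIntegral

theorem stmt_4 (a : ℝ) (ha : 0 < a) :
    ∀ᶠ τ : ℝ in atTop,
      0 < (∫ v in (1 : ℝ)..(τ / a),
            (a ^ 2 * v ^ 2 + 2) / Real.sqrt ((a ^ 2 * v ^ 2 + 4) * (v ^ 2 - 1)))
          - (τ / 2) * Real.sqrt ((τ ^ 2 + 4) / (τ ^ 2 - a ^ 2)) := by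
  rw [eventually_atTop]
  refine ⟨4 * a + 4, fun τ hτ => ?_⟩
  have hτ0 : 0 < τ := by nlinarith
  set b := τ / a with hbdef
  have hb1 : 1 < b := by
    rw [hbdef, lt_div_iff₀ ha]; nlinarith
  set f : ℝ → ℝ := fun v => (a ^ 2 * v ^ 2 + 2) / Real.sqrt ((a ^ 2 * v ^ 2 + 4) * (v ^ 2 - 1)) with hf
  -- measurability
  have hmeas : MeasureTheory.AEStronglyMeasurable f
      (MeasureTheory.volume.restrict (Set.uIoc (1:ℝ) b)) := by
    apply Measurable.aestronglyMeasurable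
    fun_prop
  -- integrability
  have hg_int : IntervalIntegrable
      (fun v : ℝ => (a ^ 2 * b ^ 2 + 2) / 2 * ((v - 1) ^ (-(1/2) : ℝ))) MeasureTheory.volume 1 b := by
    have h0 : IntervalIntegrable (fun x : ℝ => x ^ (-(1/2) : ℝ)) MeasureTheory.volume 0 (b - 1) :=
      intervalIntegral.intervalIntegrable_rpow' (by norm_num)
    have h1 := (h0.comp_sub_right 1).const_mul ((a ^ 2 * b ^ 2 + 2) / 2)
    simpa using h1
  have key : ∀ v ∈ Set.Ioc (1:ℝ) b,
      a ≤ f v ∧ f v ≤ (a ^ 2 * b ^ 2 + 2) / 2 * ((v - 1) ^ (-(1/2) : ℝ)) := by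
    intro v hv
    obtain ⟨hv1, hvb⟩ := hv
    have hv0 : 0 < v := by linarith
    have hv2 : 0 < v ^ 2 - 1 := by nlinarith [mul_pos (sub_pos.2 hv1) (show (0:ℝ) < v + 1 by linarith)]
    have hD : 0 < (a ^ 2 * v ^ 2 + 4) * (v ^ 2 - 1) := mul_pos (by positivity) hv2
    have hsD : 0 < Real.sqrt ((a ^ 2 * v ^ 2 + 4) * (v ^ 2 - 1)) := Real.sqrt_pos.2 hD
    constructor
    · rw [hf]
      rw [le_div_iff₀ hsD]
      have h2 : a * Real.sqrt ((a ^ 2 * v ^ 2 + 4) * (v ^ 2 - 1))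
          = Real.sqrt (a ^ 2 * ((a ^ 2 * v ^ 2 + 4) * (v ^ 2 - 1))) := by
        rw [Real.sqrt_mul (sq_nonneg a), Real.sqrt_sq ha.le]
      rw [h2]
      have h3 : Real.sqrt (a ^ 2 * ((a ^ 2 * v ^ 2 + 4) * (v ^ 2 - 1)))
          ≤ Real.sqrt ((a ^ 2 * v ^ 2 + 2) ^ 2) := by
        apply Real.sqrt_le_sqrt
        nlinarith [mul_nonneg (sq_nonneg (a*v)) hv2.le, mul_pos hv0 (sub_pos.2 hv1)]
      calc Real.sqrt (a ^ 2 * ((a ^ 2 * v ^ 2 + 4) * (v ^ 2 - 1)))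
          ≤ Real.sqrt ((a ^ 2 * v ^ 2 + 2) ^ 2) := h3
        _ = a ^ 2 * v ^ 2 + 2 := Real.sqrt_sq (by positivity)
    · have hrw : (v - 1) ^ (-(1/2) : ℝ) = (Real.sqrt (v - 1))⁻¹ := by
        rw [Real.sqrt_eq_rpow, ← Real.rpow_neg (by linarith)]
      rw [hrw, hf]
      have hsv : 0 < Real.sqrt (v - 1) := Real.sqrt_pos.2 (by linarith)
      have hlow : 2 * Real.sqrt (v - 1) ≤ Real.sqrt ((a ^ 2 * v ^ 2 + 4) * (v ^ 2 - 1)) := by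
        have : 2 * Real.sqrt (v - 1) = Real.sqrt (4 * (v - 1)) := by
          rw [show (4:ℝ) * (v-1) = 2^2 * (v-1) by ring, Real.sqrt_mul (by positivity),
            Real.sqrt_sq (by norm_num)]
        rw [this]
        apply Real.sqrt_le_sqrt
        nlinarith [mul_nonneg (sq_nonneg (a*v)) hv2.le, mul_pos hv0 (sub_pos.2 hv1)]
      have hnum : a ^ 2 * v ^ 2 + 2 ≤ a ^ 2 * b ^ 2 + 2 := by
        have := mul_le_mul_of_nonneg_left (pow_le_pow_left₀ hv0.le hvb 2) (sq_nonneg a)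
        linarith
      calc (a ^ 2 * v ^ 2 + 2) / Real.sqrt ((a ^ 2 * v ^ 2 + 4) * (v ^ 2 - 1))
          ≤ (a ^ 2 * b ^ 2 + 2) / (2 * Real.sqrt (v - 1)) := by
            apply div_le_div₀ (by positivity) hnum (by positivity) hlow
        _ = (a ^ 2 * b ^ 2 + 2) / 2 * (Real.sqrt (v - 1))⁻¹ := by
            rw [div_mul_eq_div_div]; ring
  have hf_int : IntervalIntegrable f MeasureTheory.volume 1 b := by
    apply hg_int.mono_fun' hmeas
    rw [Set.uIoc_of_le hb1.le]
    filter_upwards [MeasureTheory.ae_restrict_mem measurableSet_Ioc] with v hv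
    have h := key v hv
    have hD : (0:ℝ) ≤ (a ^ 2 * v ^ 2 + 4) * (v ^ 2 - 1) := by
      obtain ⟨hv1, hvb⟩ := hv
      have hv2 : (0:ℝ) ≤ v ^ 2 - 1 := by nlinarith [mul_pos (sub_pos.2 hv1) (show (0:ℝ) < v + 1 by linarith)]
      exact mul_nonneg (by positivity) hv2
    have hfnn : 0 ≤ f v := by rw [hf]; positivity
    simpa [Real.norm_eq_abs, abs_of_nonneg hfnn] using h.2
  -- lower bound the integral
  have hlow : a * (b - 1) ≤ ∫ v in (1:ℝ)..b, f v := by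
    rw [intervalIntegral.integral_of_le hb1.le]
    have hconst : ∫ _ in Set.Ioc (1:ℝ) b, a ∂MeasureTheory.volume = a * (b - 1) := by
      simp [Real.volume_Ioc, ENNReal.toReal_ofReal (by linarith : (0:ℝ) ≤ b - 1)]
      rw [max_eq_left (by linarith)]; ring
    rw [← hconst]
    apply MeasureTheory.setIntegral_mono_on
      (by simp) ((intervalIntegrable_iff_integrableOn_Ioc_of_le hb1.le).1 hf_int)
      measurableSet_Ioc
    exact fun v hv => (key v hv).1
  -- upper bound the subtracted term
  have hτa2 : 0 < τ ^ 2 - a ^ 2 := by nlinarith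
  have hs : Real.sqrt ((τ ^ 2 + 4) / (τ ^ 2 - a ^ 2)) ≤ 3 / 2 := by
    have h1 : (τ ^ 2 + 4) / (τ ^ 2 - a ^ 2) ≤ (3/2) ^ 2 := by
      rw [div_le_iff₀ hτa2]; nlinarith
    calc Real.sqrt ((τ ^ 2 + 4) / (τ ^ 2 - a ^ 2)) ≤ Real.sqrt ((3/2) ^ 2) :=
          Real.sqrt_le_sqrt h1
      _ = 3 / 2 := Real.sqrt_sq (by norm_num)
  have hterm : τ / 2 * Real.sqrt ((τ ^ 2 + 4) / (τ ^ 2 - a ^ 2)) ≤ 3 * τ / 4 := by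
    nlinarith [Real.sqrt_nonneg ((τ ^ 2 + 4) / (τ ^ 2 - a ^ 2))]
  have hab : a * (b - 1) = τ - a := by
    rw [hbdef]; field_simp
  have : (0:ℝ) < τ - a - 3 * τ / 4 := by nlinarith
  have hI := hlow
  rw [hab] at hI
  linarith
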